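/- Let μ ∈ C²([0,1]) with μ(1) ≠ 0 and μ ≥ 0, μ not identically zero, and Φ(p) = ∫₀¹ p^α μ(α) dα. Then ∫₁^∞ ds/(s·Φ(s)) < ∞. -/
import Mathlib


open Set MeasureTheory Real Filter

/-- For μ ∈ C²([0,1]) with μ(1) ≠ 0, μ ≥ 0 and μ not identically zero, the symbol
Φ(p) = ∫₀¹ p^α μ(α) dα of the distributed order derivative satisfies
∫₁^∞ ds/(s Φ(s)) < ∞. -/
theorem stmt_10 (μ : ℝ → ℝ) (hμ : ContDiffOn ℝ 2 μ (Icc 0 1)) (hμ1 : μ 1 ≠ 0)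
    (hμpos : ∀ α ∈ Icc (0:ℝ) 1, 0 ≤ μ α) (hμne : ∃ α ∈ Icc (0:ℝ) 1, μ α ≠ 0)
    (Φ : ℝ → ℝ) (hΦ : ∀ p > 0, Φ p = ∫ α in (0:ℝ)..1, p ^ α * μ α) :
    IntegrableOn (fun s : ℝ => (s * Φ s)⁻¹) (Ioi 1) := by
  have hμc : ContinuousOn μ (Icc 0 1) := hμ.continuousOn
  have h1 : (1:ℝ) ∈ Icc (0:ℝ) 1 := by constructor <;> norm_num
  have μ1pos : 0 < μ 1 := lt_of_le_of_ne (hμpos 1 h1) (Ne.symm hμ1)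
  -- choose ε > 0 with μ ≥ μ 1 / 2 on [1-ε, 1]
  have hcw : ContinuousWithinAt μ (Icc 0 1) 1 := hμc 1 h1
  rw [Metric.continuousWithinAt_iff] at hcw
  obtain ⟨δ, hδ, hδ'⟩ := hcw (μ 1 / 2) (by linarith)
  set ε : ℝ := min (δ/2) (1/2) with hεdef
  have hε0 : 0 < ε := lt_min (by linarith) (by norm_num)
  have hεhalf : ε ≤ 1/2 := min_le_right _ _
  have hbound : ∀ α ∈ Icc (1-ε) 1, μ 1 / 2 ≤ μ α := by
    intro α hα
    have hαI : α ∈ Icc (0:ℝ) 1 := ⟨by linarith [hα.1, hεhalf], hα.2⟩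
    have hd : dist α 1 < δ := by
      rw [Real.dist_eq, abs_sub_lt_iff]
      have h2 := min_le_left (δ/2) (1/2)
      constructor
      · linarith [hα.2]
      · have := hα.1
        simp only [← hεdef] at *
        linarith
    have := hδ' hαI hd
    rw [Real.dist_eq, abs_sub_lt_iff] at this
    linarith [this.2]
  -- continuous extension ν of μ
  set ν : ℝ → ℝ := fun α => μ (max 0 (min 1 α)) with hνdef
  have hν : Continuous ν := by
    apply hμc.comp_continuous
    · exact continuous_const.max (continuous_const.min continuous_id)
    · intro x
      exact ⟨le_max_left _ _, max_le (by norm_num) (min_le_left _ _)⟩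
  have hνeq : ∀ α ∈ Icc (0:ℝ) 1, ν α = μ α := by
    intro α hα
    simp only [hνdef]
    rw [min_eq_right hα.2, max_eq_right hα.1]
  have hΦrw : ∀ s > (0:ℝ), Φ s = ∫ α in Ioc (0:ℝ) 1, Real.exp (Real.log s * α) * ν α := by
    intro s hs
    rw [hΦ s hs, intervalIntegral.integral_of_le zero_le_one]
    refine setIntegral_congr_fun measurableSet_Ioc ?_
    intro α hα
    show s ^ α * μ α = Real.exp (Real.log s * α) * ν α
    rw [hνeq α ⟨le_of_lt hα.1, hα.2⟩, Real.rpow_def_of_pos hs]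
  -- measurability
  have hF : StronglyMeasurable (fun p : ℝ × ℝ => Real.exp (Real.log p.1 * p.2) * ν p.2) :=
    ((((Real.measurable_log.comp measurable_fst).mul measurable_snd).exp).mul
      (hν.measurable.comp measurable_snd)).stronglyMeasurable
  have hΨ : StronglyMeasurable
      (fun s : ℝ => ∫ α in Ioc (0:ℝ) 1, Real.exp (Real.log s * α) * ν α) :=
    hF.integral_prod_right'
  have hmeas : AEStronglyMeasurable (fun s : ℝ => (s * Φ s)⁻¹)
      (volume.restrict (Ioi (1:ℝ))) := by
    have hm : StronglyMeasurable
        (fun s : ℝ => (s * ∫ α in Ioc (0:ℝ) 1, Real.exp (Real.log s * α) * ν α)⁻¹) :=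
      ((measurable_id.mul hΨ.measurable).inv).stronglyMeasurable
    refine hm.aestronglyMeasurable.congr ?_
    filter_upwards [ae_restrict_mem measurableSet_Ioi] with s hs
    rw [hΦrw s (by linarith [mem_Ioi.mp hs])]
  -- lower bound on Φ
  have key : ∀ s ∈ Ioi (1:ℝ), ε * (μ 1 / 2) * s ^ (1 - ε) ≤ Φ s := by
    intro s hs
    have hs1 : (1:ℝ) < s := mem_Ioi.mp hs
    have hs0 : (0:ℝ) < s := by linarith
    rw [hΦ s hs0]
    have hcont : Continuous fun α : ℝ => s ^ α := by
      have : (fun α : ℝ => s ^ α) = fun α => Real.exp (Real.log s * α) := by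
        ext α; rw [Real.rpow_def_of_pos hs0]
      rw [this]; exact Real.continuous_exp.comp (continuous_const.mul continuous_id)
    have hco : ContinuousOn (fun α => s ^ α * μ α) (Icc 0 1) :=
      hcont.continuousOn.mul hμc
    have I1 : IntervalIntegrable (fun α => s ^ α * μ α) volume 0 1 := by
      apply ContinuousOn.intervalIntegrable
      rwa [uIcc_of_le zero_le_one]
    have I2 : IntervalIntegrable (fun α => s ^ α * μ α) volume (1 - ε) 1 := by
      apply ContinuousOn.intervalIntegrable
      rw [uIcc_of_le (by linarith)]
      exact hco.mono (fun x hx => ⟨by linarith [hx.1], hx.2⟩)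
    have I3 : IntervalIntegrable (fun _ : ℝ => s ^ (1 - ε) * (μ 1 / 2)) volume (1 - ε) 1 :=
      intervalIntegrable_const
    have step1 : ∫ α in (1-ε)..1, s ^ α * μ α ≤ ∫ α in (0:ℝ)..1, s ^ α * μ α := by
      apply intervalIntegral.integral_mono_interval (by linarith) (by linarith) le_rfl
      · filter_upwards [ae_restrict_mem measurableSet_Ioc] with α hα
        have : 0 ≤ μ α := hμpos α ⟨le_of_lt hα.1, hα.2⟩
        positivity
      · exact I1
    have step2 : ∫ α in (1-ε)..1, s ^ (1-ε) * (μ 1 / 2) ≤ ∫ α in (1-ε)..1, s ^ α * μ α := by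
      apply intervalIntegral.integral_mono_on (by linarith) I3 I2
      intro α hα
      have h1' : s ^ (1-ε) ≤ s ^ α := Real.rpow_le_rpow_of_exponent_le hs1.le hα.1
      have h2' : μ 1 / 2 ≤ μ α := hbound α hα
      have : (0:ℝ) ≤ s ^ α := (Real.rpow_pos_of_pos hs0 α).le
      nlinarith [Real.rpow_pos_of_pos hs0 (1-ε), μ1pos]
    have step3 : ∫ α in (1-ε)..1, s ^ (1-ε) * (μ 1 / 2) = ε * (μ 1 / 2) * s ^ (1-ε) := by
      rw [intervalIntegral.integral_const, smul_eq_mul]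
      ring
    linarith [step1, step2, step3.symm.le]
  -- compare with integrable function
  have hg : IntegrableOn (fun s : ℝ => (ε * (μ 1 / 2))⁻¹ * s ^ (ε - 2)) (Ioi (1:ℝ)) :=
    (integrableOn_Ioi_rpow_of_lt (by linarith) one_pos).const_mul _
  refine MeasureTheory.Integrable.mono hg hmeas ?_
  filter_upwards [ae_restrict_mem measurableSet_Ioi] with s hs
  have hs1 : (1:ℝ) < s := mem_Ioi.mp hs
  have hs0 : (0:ℝ) < s := by linarith
  have hΦs : ε * (μ 1 / 2) * s ^ (1-ε) ≤ Φ s := key s hs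
  have hpos : 0 < ε * (μ 1 / 2) * s ^ (2-ε) := by positivity
  have h2 : ε * (μ 1 / 2) * s ^ (2-ε) ≤ s * Φ s := by
    have hmul : s * (ε * (μ 1 / 2) * s ^ (1-ε)) ≤ s * Φ s :=
      mul_le_mul_of_nonneg_left hΦs hs0.le
    calc ε * (μ 1 / 2) * s ^ (2-ε) = s * (ε * (μ 1 / 2) * s ^ (1-ε)) := by
          rw [show (2-ε : ℝ) = 1 + (1-ε) by ring, Real.rpow_add hs0, Real.rpow_one]; ring
      _ ≤ s * Φ s := hmul
  have hsΦpos : 0 < s * Φ s := lt_of_lt_of_le hpos h2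
  have hinv : (s * Φ s)⁻¹ ≤ (ε * (μ 1 / 2))⁻¹ * s ^ (ε - 2) := by
    have h3 : (s * Φ s)⁻¹ ≤ (ε * (μ 1 / 2) * s ^ (2-ε))⁻¹ :=
      inv_anti₀ hpos h2
    calc (s * Φ s)⁻¹ ≤ (ε * (μ 1 / 2) * s ^ (2-ε))⁻¹ := h3
      _ = (ε * (μ 1 / 2))⁻¹ * s ^ (ε - 2) := by
          rw [mul_inv, ← Real.rpow_neg hs0.le]
          ring_nf
  rw [Real.norm_eq_abs, Real.norm_eq_abs, abs_of_nonneg (inv_nonneg.mpr hsΦpos.le),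
    abs_of_nonneg (by positivity)]
  exact hinv
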